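/- arXiv:1410.3371 — 2 statements merged into one kernel-verified Lean document; each statement's English description precedes it below -/
import Mathlib

section
/- For every positive integer n, every real β with 0 ≤ β < 1, every integer k ≥ 1, and every integer r ≥ 0, the moment integral of the Jain basis function satisfies ∫_0^∞ L_{n,k}^{(β)}(t) t^r dt = ((r+1)! / (k n^{r+1})) e^{−kβ} Σ_{s=0}^{k−1} C(k+r−s, r+1) (kβ)^s / s!, where C(·,·) denotes the binomial coefficient. -/
open MeasureTheory Real Filter

/-- Jain basis function `L_{n,k}^{(β)}(t) = (n t (n t + k β)^{k-1} / k!) e^{-(n t + k β)}`. -/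
noncomputable def jainL (n : ℕ) (β : ℝ) (k : ℕ) (t : ℝ) : ℝ :=
  (n : ℝ) * t * ((n : ℝ) * t + (k : ℝ) * β) ^ ((k : ℤ) - 1) / (Nat.factorial k : ℝ) *
    Real.exp (-((n : ℝ) * t + (k : ℝ) * β))

lemma intAux (m : ℕ) {a : ℝ} (ha : 0 < a) :
    IntegrableOn (fun t : ℝ => t ^ m * Real.exp (-(a * t))) (Set.Ioi 0) := by
  have h := integrableOn_rpow_mul_exp_neg_mul_rpow (p := 1) (s := m) (b := a)
    (lt_of_lt_of_le neg_one_lt_zero (Nat.cast_nonneg m)) zero_lt_one ha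
  refine h.congr_fun (fun t ht => ?_) measurableSet_Ioi
  dsimp only
  rw [Real.rpow_natCast, Real.rpow_one, neg_mul]

lemma intVal (m : ℕ) {a : ℝ} (ha : 0 < a) :
    ∫ t in Set.Ioi (0:ℝ), t ^ m * Real.exp (-(a * t)) =
      (Nat.factorial m : ℝ) / a ^ (m + 1) := by
  have h := Real.integral_rpow_mul_exp_neg_mul_Ioi (a := (m : ℝ) + 1) (r := a)
    (by positivity) ha
  rw [show ((m : ℝ) + 1) - 1 = (m : ℝ) by ring] at h
  simp_rw [Real.rpow_natCast] at h
  rw [h, Real.Gamma_nat_eq_factorial,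
    show ((m : ℝ) + 1) = ((m + 1 : ℕ) : ℝ) by push_cast; ring,
    Real.rpow_natCast, one_div, inv_pow]
  field_simp

lemma natKey (k r s : ℕ) (hk : 1 ≤ k) (hs : s < k) :
    (k-1).choose s * (k+r-s).factorial * (k * s.factorial) =
      (r+1).factorial * ((k+r-s).choose (r+1)) * k.factorial := by
  have h1 := Nat.choose_mul_factorial_mul_factorial (show s ≤ k-1 by omega)
  have h2 := Nat.choose_mul_factorial_mul_factorial (show r+1 ≤ k+r-s by omega)
  have h3 : k + r - s - (r+1) = k - 1 - s := by omega
  have h4 : k * (k-1).factorial = k.factorial := Nat.mul_factorial_pred (by omega)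
  rw [h3] at h2
  apply Nat.eq_of_mul_eq_mul_right (Nat.factorial_pos (k-1-s))
  calc (k-1).choose s * (k+r-s).factorial * (k * s.factorial) * (k-1-s).factorial
      = ((k-1).choose s * s.factorial * (k-1-s).factorial) * (k+r-s).factorial * k := by ring
    _ = (k-1).factorial * (k+r-s).factorial * k := by rw [h1]
    _ = (k-1).factorial * ((k+r-s).choose (r+1) * (r+1).factorial * (k-1-s).factorial) * k := by
        rw [h2]
    _ = (r+1).factorial * ((k+r-s).choose (r+1)) * (k * (k-1).factorial) * (k-1-s).factorial := by
        ring
    _ = (r+1).factorial * ((k+r-s).choose (r+1)) * k.factorial * (k-1-s).factorial := by rw [h4]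

theorem jain_moment_integral (n : ℕ) (hn : 0 < n) (β : ℝ) (hβ0 : 0 ≤ β) (hβ1 : β < 1)
    (k : ℕ) (hk : 1 ≤ k) (r : ℕ) :
    ∫ t in Set.Ioi (0:ℝ), jainL n β k t * t ^ r =
      (Nat.factorial (r + 1) : ℝ) / ((k : ℝ) * (n : ℝ) ^ (r + 1)) *
        Real.exp (-((k : ℝ) * β)) *
        ∑ s ∈ Finset.range k,
          (Nat.choose (k + r - s) (r + 1) : ℝ) * ((k : ℝ) * β) ^ s / (Nat.factorial s : ℝ) := by
  have hn' : (0:ℝ) < n := by exact_mod_cast hn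
  set c : ℝ := (k:ℝ) * β with hc
  have hstep : Set.EqOn (fun t => jainL n β k t * t ^ r)
      (fun t => ∑ s ∈ Finset.range k,
        (((k-1).choose s : ℝ) * c ^ s * (n:ℝ) ^ (k - s) / (k.factorial : ℝ) * Real.exp (-c)) *
          (t ^ (k + r - s) * Real.exp (-((n:ℝ) * t)))) (Set.Ioi 0) := by
    intro t ht
    simp only [jainL]
    rw [show ((k:ℤ) - 1) = ((k - 1 : ℕ) : ℤ) by omega, zpow_natCast,
      show (n:ℝ) * t + c = c + (n:ℝ) * t by ring, add_pow,
      show k - 1 + 1 = k by omega,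
      show -(c + (n:ℝ) * t) = -((n:ℝ)*t) + -c by ring, Real.exp_add,
      Finset.mul_sum, Finset.sum_div, Finset.sum_mul, Finset.sum_mul]
    refine Finset.sum_congr rfl (fun s hs => ?_)
    have hsk : s < k := Finset.mem_range.mp hs
    have e1 : (n:ℝ)^(k-s) = (n:ℝ) * (n:ℝ)^(k-1-s) := by
      rw [← pow_succ']; congr 1; omega
    have e2 : t^(k+r-s) = t * t^(k-1-s) * t^r := by
      rw [mul_assoc, ← pow_add, ← pow_succ']; congr 1; omega
    rw [e1, e2, mul_pow]
    ring
  rw [setIntegral_congr_fun measurableSet_Ioi hstep,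
    integral_finset_sum _ (fun s hs => ((intAux (k+r-s) hn').const_mul _)),
    Finset.mul_sum]
  refine Finset.sum_congr rfl (fun s hs => ?_)
  have hsk : s < k := Finset.mem_range.mp hs
  rw [integral_const_mul, intVal _ hn']
  have key := natKey k r s hk hsk
  have keyR : ((k-1).choose s : ℝ) * (k+r-s).factorial * ((k:ℝ) * s.factorial) =
      ((r+1).factorial : ℝ) * ((k+r-s).choose (r+1)) * k.factorial := by exact_mod_cast key
  have hpow : (n:ℝ)^(k+r-s+1) = (n:ℝ)^(k-s) * (n:ℝ)^(r+1) := by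
    rw [← pow_add]; congr 1; omega
  rw [hpow]
  have h1 : (k.factorial : ℝ) ≠ 0 := by positivity
  have h2 : (s.factorial : ℝ) ≠ 0 := by positivity
  have h3 : (k:ℝ) ≠ 0 := by positivity
  have h4 : (n:ℝ) ≠ 0 := ne_of_gt hn'
  field_simp
  linear_combination ((k:ℝ)^s * β^s) * keyR
end

section
/- For every positive integer n, every real β with 0 ≤ β < 1, every integer k ≥ 1, and every integer r ≥ 0, the normalized moments M_r(k) = (∫_0^∞ L_{n,k}^{(β)}(t) t^r dt) / (∫_0^∞ L_{n,k}^{(β)}(t) dt) satisfy the three-term recurrence n² M_{r+2}(k) = n [ (1−β) k + r + 2 ] M_{r+1}(k) + (r+2) β k M_r(k). -/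
open MeasureTheory Real Filter

open Topology Polynomial

lemma polyexp_tendsto (p : ℝ[X]) {b : ℝ} (hb : 0 < b) :
    Tendsto (fun t : ℝ => p.eval t * Real.exp (-(b * t))) atTop (𝓝 0) := by
  have h := (p.comp (C b⁻¹ * X)).tendsto_div_exp_atTop
  have h2 : Tendsto (fun t : ℝ => b * t) atTop atTop :=
    Tendsto.const_mul_atTop hb tendsto_id
  have h3 := h.comp h2
  convert h3 using 2 with t
  simp only [Function.comp, eval_comp, eval_mul, eval_C, eval_X]
  rw [inv_mul_cancel_left₀ hb.ne', Real.exp_neg, div_eq_mul_inv]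

lemma polyexp_isBigO (p : ℝ[X]) {b : ℝ} (hb : 0 < b) :
    (fun t : ℝ => p.eval t * Real.exp (-(b * t))) =O[atTop]
      (fun t : ℝ => Real.exp (-(b/2) * t)) := by
  have h : Tendsto (fun t : ℝ => p.eval t * Real.exp (-(b/2 * t))) atTop (𝓝 0) :=
    polyexp_tendsto p (half_pos hb)
  have hO := h.isBigO_one ℝ
  have heq : (fun t : ℝ => p.eval t * Real.exp (-(b*t)))
      = fun t => (p.eval t * Real.exp (-(b/2 * t))) * Real.exp (-(b/2) * t) := by
    funext t
    rw [mul_assoc, ← Real.exp_add]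
    congr 2
    ring
  rw [heq]
  simpa using hO.mul (Asymptotics.isBigO_refl (fun t : ℝ => Real.exp (-(b/2) * t)) atTop)

lemma polyexp_integrableOn (p : ℝ[X]) {b : ℝ} (hb : 0 < b) :
    IntegrableOn (fun t : ℝ => p.eval t * Real.exp (-(b * t))) (Set.Ioi 0) := by
  apply integrable_of_isBigO_exp_neg (half_pos hb)
    ((p.continuous.mul (Real.continuous_exp.comp
      ((continuous_const.mul continuous_id).neg))).continuousOn) (polyexp_isBigO p hb)

theorem jain_moment_recurrence (n : ℕ) (hn : 0 < n) (β : ℝ) (hβ0 : 0 ≤ β) (hβ1 : β < 1)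
    (k : ℕ) (hk : 1 ≤ k) (r : ℕ) :
    (n : ℝ) ^ 2 * ((∫ t in Set.Ioi (0:ℝ), jainL n β k t * t ^ (r + 2)) /
        (∫ t in Set.Ioi (0:ℝ), jainL n β k t)) =
      (n : ℝ) * ((1 - β) * (k : ℝ) + (r : ℝ) + 2) *
        ((∫ t in Set.Ioi (0:ℝ), jainL n β k t * t ^ (r + 1)) /
          (∫ t in Set.Ioi (0:ℝ), jainL n β k t)) +
      ((r : ℝ) + 2) * β * (k : ℝ) *
        ((∫ t in Set.Ioi (0:ℝ), jainL n β k t * t ^ r) /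
          (∫ t in Set.Ioi (0:ℝ), jainL n β k t)) := by
  obtain ⟨m, rfl⟩ : ∃ m, k = m + 1 := ⟨k - 1, (Nat.succ_pred_eq_of_pos hk).symm⟩
  have hnpos : (0:ℝ) < (n:ℝ) := by exact_mod_cast hn
  have hn' : (n:ℝ) ≠ 0 := hnpos.ne'
  have hfac : (Nat.factorial (m+1) : ℝ) ≠ 0 := by
    exact_mod_cast (Nat.factorial_pos (m+1)).ne'
  have hz : ∀ t : ℝ, ((n:ℝ)*t + ((m+1:ℕ):ℝ)*β) ^ (((m+1:ℕ):ℤ) - 1)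
      = ((n:ℝ)*t + ((m:ℝ)+1)*β)^m := by
    intro t
    push_cast
    rw [show ((m:ℤ)+1-1) = (m:ℤ) by ring, zpow_natCast]
  -- polynomial representation of the integrands
  have hGrep : ∀ j : ℕ, (fun t : ℝ => jainL n β (m+1) t * t^j)
      = fun t => (C ((n:ℝ) * Real.exp (-(((m:ℝ)+1)*β)) / (Nat.factorial (m+1) : ℝ)) *
          X^(j+1) * (C (n:ℝ) * X + C (((m:ℝ)+1)*β))^m).eval t * Real.exp (-((n:ℝ)*t)) := by
    intro j
    funext t
    simp only [jainL, hz, eval_mul, eval_pow, eval_add, eval_C, eval_X]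
    rw [show -((n:ℝ)*t + ((m+1:ℕ):ℝ)*β) = -((n:ℝ)*t) + -(((m:ℝ)+1)*β) by push_cast; ring,
      Real.exp_add]
    push_cast
    ring
  have hG : ∀ j : ℕ, IntegrableOn (fun t : ℝ => jainL n β (m+1) t * t^j) (Set.Ioi 0) := by
    intro j
    rw [hGrep j]
    exact polyexp_integrableOn _ hnpos
  -- the antiderivative
  set F : ℝ → ℝ := fun t => (n:ℝ) *
      (t^(r+2) * ((n:ℝ)*t + ((m:ℝ)+1)*β)^(m+1) * Real.exp (-((n:ℝ)*t + ((m:ℝ)+1)*β))) /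
      (Nat.factorial (m+1) : ℝ) with hF
  set H : ℝ → ℝ := fun t =>
      -(n:ℝ)^2 * (jainL n β (m+1) t * t^(r+2)) +
      (n:ℝ) * ((1 - β) * ((m+1:ℕ):ℝ) + (r:ℝ) + 2) * (jainL n β (m+1) t * t^(r+1)) +
      ((r:ℝ)+2) * β * ((m+1:ℕ):ℝ) * (jainL n β (m+1) t * t^r) with hH
  have hderiv : ∀ t : ℝ, HasDerivAt F (H t) t := by
    intro t
    have hu : HasDerivAt (fun s : ℝ => (n:ℝ)*s + ((m:ℝ)+1)*β) (n:ℝ) t := by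
      simpa using ((hasDerivAt_id t).const_mul (n:ℝ)).add_const (((m:ℝ)+1)*β)
    have hA : HasDerivAt (fun s : ℝ => s^(r+2)) (((r:ℝ)+2)*t^(r+1)) t := by
      have := hasDerivAt_pow (r+2) t
      rw [show r + 2 - 1 = r + 1 by omega] at this
      exact_mod_cast this
    have hB : HasDerivAt (fun s : ℝ => ((n:ℝ)*s + ((m:ℝ)+1)*β)^(m+1))
        (((m:ℝ)+1) * ((n:ℝ)*t + ((m:ℝ)+1)*β)^m * (n:ℝ)) t := by
      have := hu.fun_pow (m+1)
      simpa using this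
    have hC : HasDerivAt (fun s : ℝ => Real.exp (-((n:ℝ)*s + ((m:ℝ)+1)*β)))
        (Real.exp (-((n:ℝ)*t + ((m:ℝ)+1)*β)) * (-(n:ℝ))) t := by
      simpa using hu.neg.exp
    have hraw := (((hA.mul hB).mul hC).const_mul (n:ℝ)).div_const ((Nat.factorial (m+1) : ℝ))
    have heq : H t = (n:ℝ) * ((((r:ℝ)+2)*t^(r+1) * ((n:ℝ)*t + ((m:ℝ)+1)*β)^(m+1) +
        t^(r+2) * (((m:ℝ)+1) * ((n:ℝ)*t + ((m:ℝ)+1)*β)^m * (n:ℝ))) *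
        Real.exp (-((n:ℝ)*t + ((m:ℝ)+1)*β)) +
        t^(r+2) * ((n:ℝ)*t + ((m:ℝ)+1)*β)^(m+1) *
        (Real.exp (-((n:ℝ)*t + ((m:ℝ)+1)*β)) * (-(n:ℝ)))) / (Nat.factorial (m+1) : ℝ) := by
      simp only [hH, jainL, hz]
      rw [show -((n:ℝ)*t + ((m+1:ℕ):ℝ)*β) = -((n:ℝ)*t + ((m:ℝ)+1)*β) by push_cast; ring]
      simp only [pow_succ]
      push_cast
      field_simp
      ring
    rw [heq]
    exact hraw
  have hHint : IntegrableOn H (Set.Ioi 0) := by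
    apply (((hG (r+2)).const_mul _).add ((hG (r+1)).const_mul _)).add ((hG r).const_mul _)
  have hFtop : Tendsto F atTop (𝓝 0) := by
    have hrep : F = fun t => ((C ((n:ℝ) * Real.exp (-(((m:ℝ)+1)*β)) / (Nat.factorial (m+1) : ℝ)) *
        X^(r+2) * (C (n:ℝ) * X + C (((m:ℝ)+1)*β))^(m+1)).eval t) * Real.exp (-((n:ℝ)*t)) := by
      funext t
      simp only [hF, eval_mul, eval_pow, eval_add, eval_C, eval_X]
      rw [show -((n:ℝ)*t + ((m:ℝ)+1)*β) = -((n:ℝ)*t) + -(((m:ℝ)+1)*β) by ring, Real.exp_add]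
      ring
    rw [hrep]
    exact polyexp_tendsto _ hnpos
  have hint0 : ∫ t in Set.Ioi (0:ℝ), H t = 0 := by
    rw [integral_Ioi_of_hasDerivAt_of_tendsto' (fun x _ => hderiv x) hHint hFtop]
    simp [hF]
  have hsplit : ∫ t in Set.Ioi (0:ℝ), H t =
      -(n:ℝ)^2 * (∫ t in Set.Ioi (0:ℝ), jainL n β (m+1) t * t^(r+2)) +
      (n:ℝ) * ((1 - β) * ((m+1:ℕ):ℝ) + (r:ℝ) + 2) *
        (∫ t in Set.Ioi (0:ℝ), jainL n β (m+1) t * t^(r+1)) +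
      ((r:ℝ)+2) * β * ((m+1:ℕ):ℝ) * (∫ t in Set.Ioi (0:ℝ), jainL n β (m+1) t * t^r) := by
    simp only [hH]
    have h2 : Integrable (fun t : ℝ => -(n:ℝ)^2 * (jainL n β (m+1) t * t^(r+2)))
        (volume.restrict (Set.Ioi 0)) := (hG (r+2)).const_mul _
    have h1 : Integrable (fun t : ℝ =>
        (n:ℝ) * ((1 - β) * ((m+1:ℕ):ℝ) + (r:ℝ) + 2) * (jainL n β (m+1) t * t^(r+1)))
        (volume.restrict (Set.Ioi 0)) := (hG (r+1)).const_mul _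
    have h0 : Integrable (fun t : ℝ =>
        ((r:ℝ)+2) * β * ((m+1:ℕ):ℝ) * (jainL n β (m+1) t * t^r))
        (volume.restrict (Set.Ioi 0)) := (hG r).const_mul _
    have h21 : Integrable (fun t : ℝ => -(n:ℝ)^2 * (jainL n β (m+1) t * t^(r+2)) +
        (n:ℝ) * ((1 - β) * ((m+1:ℕ):ℝ) + (r:ℝ) + 2) * (jainL n β (m+1) t * t^(r+1)))
        (volume.restrict (Set.Ioi 0)) := h2.add h1
    rw [integral_add h21 h0, integral_add h2 h1,
      integral_const_mul, integral_const_mul, integral_const_mul]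
  have key : (n:ℝ)^2 * (∫ t in Set.Ioi (0:ℝ), jainL n β (m+1) t * t^(r+2)) =
      (n:ℝ) * ((1 - β) * ((m+1:ℕ):ℝ) + (r:ℝ) + 2) *
        (∫ t in Set.Ioi (0:ℝ), jainL n β (m+1) t * t^(r+1)) +
      ((r:ℝ)+2) * β * ((m+1:ℕ):ℝ) * (∫ t in Set.Ioi (0:ℝ), jainL n β (m+1) t * t^r) := by
    have h := hint0
    rw [hsplit] at h
    linarith
  rw [mul_div_assoc', mul_div_assoc', mul_div_assoc', key, add_div]
end
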